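/- The function φ(p) = ∑_{n≥1} (-1)^{n+1} p^n / (1 + (-1)^n p^n)², defined for p ∈ (0,1), is strictly increasing on (0, 1/2), satisfies φ(0⁺) = 0 and φ(1/2) > 1/8. Consequently there exists a unique p₀ ∈ (0, 1/2) with φ(p₀) = 1/8, equivalently a unique rhombic elliptic curve τ₀ = 1/2 + iλ₀ with ϑ₂''(0 | τ₀) = 0. -/

import Mathlib

open Set Filter

/-- The `n`-th term of the series for `φ`. -/
noncomputable def F15 (p : ℝ) (n : ℕ) : ℝ :=
  ((-1 : ℝ) ^ n * p ^ (n + 1)) / (1 + (-1 : ℝ) ^ (n + 1) * p ^ (n + 1)) ^ 2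

/-- Pairs of consecutive terms. -/
noncomputable def G15 (k : ℕ) (p : ℝ) : ℝ :=
  p ^ (2 * k + 1) / (1 - p ^ (2 * k + 1)) ^ 2 - p ^ (2 * k + 2) / (1 + p ^ (2 * k + 2)) ^ 2

lemma pow_le_half {p : ℝ} (h0 : 0 ≤ p) (h1 : p ≤ 1 / 2) (n : ℕ) : p ^ (n + 1) ≤ 1 / 2 :=
  le_trans (pow_le_pow_of_le_one h0 (by linarith) (Nat.le_add_left 1 n)) (by simpa using h1)

lemma denom_ge {p : ℝ} (h0 : 0 ≤ p) (h1 : p ≤ 1 / 2) (n : ℕ) :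
    (1 : ℝ) / 2 ≤ 1 + (-1 : ℝ) ^ (n + 1) * p ^ (n + 1) := by
  have hp : p ^ (n + 1) ≤ 1 / 2 := pow_le_half h0 h1 n
  have hp0 : 0 ≤ p ^ (n + 1) := pow_nonneg h0 _
  rcases Nat.even_or_odd (n + 1) with he | ho
  · rw [he.neg_one_pow]; linarith
  · rw [ho.neg_one_pow]; linarith

lemma F15_bound {p : ℝ} (h0 : 0 ≤ p) (h1 : p ≤ 1 / 2) (n : ℕ) :
    ‖F15 p n‖ ≤ 4 * p ^ (n + 1) := by
  have hd := denom_ge h0 h1 n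
  have hp0 : 0 ≤ p ^ (n + 1) := pow_nonneg h0 _
  have hd2 : (1 : ℝ) / 4 ≤ (1 + (-1 : ℝ) ^ (n + 1) * p ^ (n + 1)) ^ 2 := by nlinarith
  have hnum : |(-1 : ℝ) ^ n * p ^ (n + 1)| = p ^ (n + 1) := by
    rw [abs_mul, abs_pow, abs_neg, abs_one, one_pow, one_mul, abs_of_nonneg hp0]
  rw [F15, Real.norm_eq_abs, abs_div, hnum, abs_of_nonneg (by linarith : (0:ℝ) ≤ _)]
  rw [div_le_iff₀ (by linarith)]
  nlinarith

lemma F15_bound' {p : ℝ} (h0 : 0 ≤ p) (h1 : p ≤ 1 / 2) (n : ℕ) :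
    ‖F15 p n‖ ≤ 4 * (1 / 2) ^ (n + 1) := by
  refine (F15_bound h0 h1 n).trans ?_
  have : p ^ (n + 1) ≤ (1 / 2 : ℝ) ^ (n + 1) := pow_le_pow_left₀ h0 h1 _
  linarith

lemma summable_F15 {p : ℝ} (h0 : 0 ≤ p) (h1 : p ≤ 1 / 2) : Summable (F15 p) := by
  refine Summable.of_norm_bounded ?_ (F15_bound' h0 h1)
  have : Summable (fun n : ℕ => (1 / 2 : ℝ) ^ n) :=
    summable_geometric_of_lt_one (by norm_num) (by norm_num)
  simpa [pow_succ, mul_comm, mul_assoc, mul_left_comm] using (this.mul_left (4 * (1/2))).congr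
    (fun n => by rw [one_div, inv_pow]; ring)

/-- `φ(p) = ∑_{n≥1} (-1)^{n+1} pⁿ / (1 + (-1)ⁿ pⁿ)²`. -/
noncomputable def phi15 (p : ℝ) : ℝ :=
  ∑' n : ℕ, ((-1 : ℝ) ^ n * p ^ (n + 1)) / (1 + (-1 : ℝ) ^ (n + 1) * p ^ (n + 1)) ^ 2

lemma F15_even (p : ℝ) (k : ℕ) :
    F15 p (2 * k) = p ^ (2 * k + 1) / (1 - p ^ (2 * k + 1)) ^ 2 := by
  have h1 : ((-1 : ℝ)) ^ (2 * k) = 1 := by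
    rw [pow_mul]; norm_num
  have h2 : ((-1 : ℝ)) ^ (2 * k + 1) = -1 := by
    rw [pow_succ, h1]; ring
  simp only [F15, h1, h2]; ring_nf

lemma F15_odd (p : ℝ) (k : ℕ) :
    F15 p (2 * k + 1) = -(p ^ (2 * k + 2) / (1 + p ^ (2 * k + 2)) ^ 2) := by
  have h1 : ((-1 : ℝ)) ^ (2 * k) = 1 := by rw [pow_mul]; norm_num
  have h2 : ((-1 : ℝ)) ^ (2 * k + 1) = -1 := by rw [pow_succ, h1]; ring
  have h3 : ((-1 : ℝ)) ^ (2 * k + 1 + 1) = 1 := by rw [pow_succ, h2]; ring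
  simp only [F15, h2, h3]
  ring_nf

lemma summable_even {p : ℝ} (h0 : 0 ≤ p) (h1 : p ≤ 1 / 2) :
    Summable (fun k => F15 p (2 * k)) :=
  (summable_F15 h0 h1).comp_injective (fun a b h => by omega)

lemma summable_odd {p : ℝ} (h0 : 0 ≤ p) (h1 : p ≤ 1 / 2) :
    Summable (fun k => F15 p (2 * k + 1)) :=
  (summable_F15 h0 h1).comp_injective (fun a b h => by omega)

lemma G15_eq (p : ℝ) (k : ℕ) : G15 k p = F15 p (2 * k) + F15 p (2 * k + 1) := by
  rw [F15_even, F15_odd, G15]; ring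

lemma summable_G15 {p : ℝ} (h0 : 0 ≤ p) (h1 : p ≤ 1 / 2) :
    Summable (fun k => G15 k p) := by
  have := (summable_even h0 h1).add (summable_odd h0 h1)
  exact this.congr (fun k => (G15_eq p k).symm)

lemma phi15_eq_tsum_G15 {p : ℝ} (h0 : 0 ≤ p) (h1 : p ≤ 1 / 2) :
    phi15 p = ∑' k, G15 k p := by
  have he := summable_even h0 h1
  have ho := summable_odd h0 h1
  have h := tsum_even_add_odd he ho
  calc phi15 p = ∑' n, F15 p n := rfl
    _ = (∑' k, F15 p (2 * k)) + ∑' k, F15 p (2 * k + 1) := h.symm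
    _ = ∑' k, (F15 p (2 * k) + F15 p (2 * k + 1)) := (Summable.tsum_add he ho).symm
    _ = ∑' k, G15 k p := by exact tsum_congr (fun k => (G15_eq p k).symm)

noncomputable def D15 (k : ℕ) (p : ℝ) : ℝ :=
  (2 * k + 1 : ℝ) * p ^ (2 * k) * (1 + p ^ (2 * k + 1)) / (1 - p ^ (2 * k + 1)) ^ 3
    - (2 * k + 2 : ℝ) * p ^ (2 * k + 1) * (1 - p ^ (2 * k + 2)) / (1 + p ^ (2 * k + 2)) ^ 3

lemma hasDerivAt_G15 (k : ℕ) {p : ℝ} (hx : p ^ (2 * k + 1) ≠ 1) (hy : p ^ (2 * k + 2) ≠ -1) :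
    HasDerivAt (G15 k) (D15 k p) p := by
  have hm : (2 * k + 1) - 1 = 2 * k := by omega
  have hn : (2 * k + 2) - 1 = 2 * k + 1 := by omega
  have h1 : HasDerivAt (fun x : ℝ => x ^ (2 * k + 1)) ((2 * k + 1 : ℝ) * p ^ (2 * k)) p := by
    have := hasDerivAt_pow (2 * k + 1) p
    rw [hm] at this; exact_mod_cast this
  have h2 : HasDerivAt (fun x : ℝ => x ^ (2 * k + 2)) ((2 * k + 2 : ℝ) * p ^ (2 * k + 1)) p := by
    have := hasDerivAt_pow (2 * k + 2) p
    rw [hn] at this; exact_mod_cast this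
  have hd1 : HasDerivAt (fun x : ℝ => (1 - x ^ (2 * k + 1)) ^ 2)
      (2 * (1 - p ^ (2 * k + 1)) ^ 1 * (0 - (2 * k + 1 : ℝ) * p ^ (2 * k))) p := by
    simpa using ((hasDerivAt_const p (1:ℝ)).fun_sub h1).fun_pow 2
  have hd2 : HasDerivAt (fun x : ℝ => (1 + x ^ (2 * k + 2)) ^ 2)
      (2 * (1 + p ^ (2 * k + 2)) ^ 1 * (0 + (2 * k + 2 : ℝ) * p ^ (2 * k + 1))) p := by
    simpa using ((hasDerivAt_const p (1:ℝ)).fun_add h2).fun_pow 2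
  have hden1 : (1 - p ^ (2 * k + 1)) ^ 2 ≠ 0 := pow_ne_zero _ (sub_ne_zero.2 (Ne.symm hx))
  have hden2 : (1 + p ^ (2 * k + 2)) ^ 2 ≠ 0 := by
    apply pow_ne_zero; intro h; apply hy; linarith [h]
  have hA := h1.fun_div hd1 hden1
  have hB := h2.fun_div hd2 hden2
  have := hA.fun_sub hB
  refine this.congr_deriv ?_
  rw [D15]
  have hx' : (1 : ℝ) - p ^ (2 * k + 1) ≠ 0 := sub_ne_zero.2 (Ne.symm hx)
  have hy' : (1 : ℝ) + p ^ (2 * k + 2) ≠ 0 := fun h => hy (by linarith)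
  field_simp
  ring

lemma D15_pos (k : ℕ) {p : ℝ} (h0 : 0 < p) (h1 : p < 1 / 2) : 0 < D15 k p := by
  set a := p ^ (2 * k) with ha
  have hx_eq : p ^ (2 * k + 1) = a * p := by rw [ha, pow_succ]
  have hy_eq : p ^ (2 * k + 2) = a * p * p := by rw [ha, pow_succ, pow_succ]
  set x := p ^ (2 * k + 1) with hxd
  set y := p ^ (2 * k + 2) with hyd
  have hp1 : p < 1 := by linarith
  have ha0 : 0 < a := pow_pos h0 _
  have ha1 : a ≤ 1 := pow_le_one₀ h0.le hp1.le
  have hx0 : 0 < x := pow_pos h0 _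
  have hx1 : x < 1 := pow_lt_one₀ h0.le hp1 (by omega)
  have hy0 : 0 < y := pow_pos h0 _
  have hy1 : y < 1 := pow_lt_one₀ h0.le hp1 (by omega)
  rw [D15, ← hxd, ← hyd, ← ha]
  have hden1 : (0:ℝ) < (1 - x) ^ 3 := pow_pos (by linarith) 3
  have hden2 : (0:ℝ) < (1 + y) ^ 3 := by positivity
  have hk0 : (0:ℝ) ≤ (k : ℝ) := Nat.cast_nonneg k
  -- Term2 ≤ (2k+2) x
  have hT2 : (2 * (k:ℝ) + 2) * x * (1 - y) / (1 + y) ^ 3 ≤ (2 * (k:ℝ) + 2) * x := by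
    rw [div_le_iff₀ hden2]
    have hcy : (1:ℝ) - y ≤ (1 + y) ^ 3 := by nlinarith [sq_nonneg y, mul_nonneg hy0.le hy0.le]
    have hc0 : (0:ℝ) ≤ (2 * (k:ℝ) + 2) * x := by positivity
    exact mul_le_mul_of_nonneg_left hcy hc0
  -- (2k+1) a ≤ Term1
  have hT1 : (2 * (k:ℝ) + 1) * a ≤ (2 * (k:ℝ) + 1) * a * (1 + x) / (1 - x) ^ 3 := by
    rw [le_div_iff₀ hden1]
    have hcx : ((1:ℝ) - x) ^ 3 ≤ 1 + x := by nlinarith [sq_nonneg x, mul_nonneg hx0.le hx0.le]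
    have hc0 : (0:ℝ) ≤ (2 * (k:ℝ) + 1) * a := by positivity
    exact mul_le_mul_of_nonneg_left hcx hc0
  -- middle strict inequality
  have hmid : (2 * (k:ℝ) + 2) * x < (2 * (k:ℝ) + 1) * a := by
    rw [hx_eq]
    have hs : (2 * (k:ℝ) + 2) * p < 2 * (k:ℝ) + 1 := by
      have := mul_lt_mul_of_pos_left h1 (show (0:ℝ) < 2 * (k:ℝ) + 2 by positivity)
      nlinarith
    nlinarith [mul_lt_mul_of_pos_left hs ha0]
  have : (2 * (k:ℝ) + 2) * x * (1 - y) / (1 + y) ^ 3 <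
      (2 * (k:ℝ) + 1) * a * (1 + x) / (1 - x) ^ 3 := lt_of_le_of_lt hT2 (lt_of_lt_of_le hmid hT1)
  linarith

lemma continuousOn_G15 (k : ℕ) : ContinuousOn (G15 k) (Icc (0:ℝ) (1/2)) := by
  have hc1 : ∀ p ∈ Icc (0:ℝ) (1/2), ((1:ℝ) - p ^ (2 * k + 1)) ^ 2 ≠ 0 := by
    intro p hp
    have h := pow_le_half hp.1 hp.2 (2 * k)
    have : (0:ℝ) < 1 - p ^ (2 * k + 1) := by linarith
    exact pow_ne_zero _ this.ne'
  have hc2 : ∀ p ∈ Icc (0:ℝ) (1/2), ((1:ℝ) + p ^ (2 * k + 2)) ^ 2 ≠ 0 := by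
    intro p hp
    have h := pow_nonneg hp.1 (2 * k + 2)
    have : (0:ℝ) < 1 + p ^ (2 * k + 2) := by linarith
    exact pow_ne_zero _ this.ne'
  exact ((continuousOn_pow _).div ((continuousOn_const.sub (continuousOn_pow _)).pow 2) hc1).sub
    ((continuousOn_pow _).div ((continuousOn_const.add (continuousOn_pow _)).pow 2) hc2)

lemma strictMonoOn_G15 (k : ℕ) : StrictMonoOn (G15 k) (Icc (0:ℝ) (1/2)) := by
  apply strictMonoOn_of_deriv_pos (convex_Icc _ _) (continuousOn_G15 k)
  intro p hp
  rw [interior_Icc] at hp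
  have hx : p ^ (2 * k + 1) ≠ 1 := by
    have : p ^ (2 * k + 1) ≤ 1 / 2 := pow_le_half hp.1.le (le_of_lt hp.2) (2 * k)
    linarith
  have hy : p ^ (2 * k + 2) ≠ -1 := by
    have := pow_nonneg hp.1.le (2 * k + 2); intro h; linarith
  rw [(hasDerivAt_G15 k hx hy).deriv]
  exact D15_pos k hp.1 hp.2

lemma G15_nonneg {p : ℝ} (h0 : 0 ≤ p) (h1 : p ≤ 1 / 2) (k : ℕ) : 0 ≤ G15 k p := by
  rcases eq_or_lt_of_le h0 with h | h
  · simp [G15, ← h, zero_pow]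
  · have := strictMonoOn_G15 k (left_mem_Icc.2 (by norm_num)) ⟨h0, h1⟩ h
    simpa [G15] using this.le

lemma strictMonoOn_phi15 : StrictMonoOn phi15 (Ioo (0:ℝ) (1/2)) := by
  intro p hp q hq hpq
  rw [phi15_eq_tsum_G15 hp.1.le hp.2.le, phi15_eq_tsum_G15 hq.1.le hq.2.le]
  have hple : (fun k => G15 k p) ≤ fun k => G15 k q := fun k =>
    ((strictMonoOn_G15 k) ⟨hp.1.le, hp.2.le⟩ ⟨hq.1.le, hq.2.le⟩ hpq).le
  exact Summable.tsum_lt_tsum hple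
    ((strictMonoOn_G15 0) ⟨hp.1.le, hp.2.le⟩ ⟨hq.1.le, hq.2.le⟩ hpq)
    (summable_G15 hp.1.le hp.2.le) (summable_G15 hq.1.le hq.2.le)

lemma phi15_nonneg {p : ℝ} (h0 : 0 ≤ p) (h1 : p ≤ 1/2) : 0 ≤ phi15 p := by
  rw [phi15_eq_tsum_G15 h0 h1]
  exact tsum_nonneg (G15_nonneg h0 h1)

lemma phi15_le {p : ℝ} (h0 : 0 ≤ p) (h1 : p ≤ 1/2) : phi15 p ≤ 8 * p := by
  have hlt : p < 1 := by linarith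
  have hg : Summable (fun n : ℕ => 4 * p ^ (n + 1)) := by
    have : Summable (fun n : ℕ => p ^ n) := summable_geometric_of_lt_one h0 hlt
    exact ((this.mul_left (4 * p)).congr (fun n => by ring))
  have hle : phi15 p ≤ ∑' n : ℕ, 4 * p ^ (n + 1) := by
    refine Summable.tsum_le_tsum (fun n => ?_) (summable_F15 h0 h1) hg
    exact (le_abs_self _).trans (F15_bound h0 h1 n)
  have heq : ∑' n : ℕ, 4 * p ^ (n + 1) = 4 * p * (1 - p)⁻¹ := by
    rw [show (fun n : ℕ => 4 * p ^ (n + 1)) = fun n : ℕ => 4 * p * p ^ n by funext n; ring,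
      tsum_mul_left, tsum_geometric_of_lt_one h0 hlt]
  have hinv : (1 - p)⁻¹ ≤ 2 := by
    rw [show (2:ℝ) = ((1:ℝ)/2)⁻¹ by norm_num]
    exact inv_anti₀ (by norm_num) (by linarith)
  have : 4 * p * (1 - p)⁻¹ ≤ 4 * p * 2 := by
    apply mul_le_mul_of_nonneg_left hinv (by linarith)
  calc phi15 p ≤ 4 * p * (1 - p)⁻¹ := heq ▸ hle
    _ ≤ 4 * p * 2 := this
    _ = 8 * p := by ring

lemma tendsto_phi15 : Tendsto phi15 (nhdsWithin 0 (Ioi 0)) (nhds 0) := by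
  have hmem : Ioo (0:ℝ) (1/2) ∈ nhdsWithin (0:ℝ) (Ioi 0) :=
    Ioo_mem_nhdsGT_of_mem (by norm_num : (0:ℝ) ∈ Ico (0:ℝ) (1/2))
  refine squeeze_zero' (eventually_of_mem hmem fun p hp => phi15_nonneg hp.1.le hp.2.le)
    (eventually_of_mem hmem fun p hp => phi15_le hp.1.le hp.2.le) ?_
  have : Tendsto (fun p : ℝ => 8 * p) (nhds 0) (nhds 0) := by
    have h : Tendsto (fun p : ℝ => 8 * p) (nhds 0) (nhds (8 * 0)) :=
      (continuous_const.mul continuous_id).tendsto 0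
    simpa using h
  exact this.mono_left nhdsWithin_le_nhds

lemma phi15_half : 1/8 < phi15 (1/2 : ℝ) := by
  rw [phi15_eq_tsum_G15 (by norm_num) le_rfl]
  have h0 : G15 0 (1/2) = 46/25 := by rw [G15]; norm_num
  have hle := Summable.le_tsum (summable_G15 (by norm_num : (0:ℝ) ≤ 1/2) le_rfl) 0
    (fun k _ => G15_nonneg (by norm_num) le_rfl k)
  rw [h0] at hle
  linarith

lemma continuousOn_phi15 : ContinuousOn phi15 (Icc (0:ℝ) (1/2)) := by
  have : ContinuousOn (fun p => ∑' n, F15 p n) (Icc (0:ℝ) (1/2)) := by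
    refine continuousOn_tsum (u := fun n => 4 * (1/2:ℝ) ^ (n + 1)) (fun n => ?_) ?_
      (fun n p hp => F15_bound' hp.1 hp.2 n)
    · refine ContinuousOn.div (by fun_prop) (by fun_prop) ?_
      intro p hp
      have := denom_ge hp.1 hp.2 n
      positivity
    · have : Summable (fun n : ℕ => (1/2:ℝ) ^ n) :=
        summable_geometric_of_lt_one (by norm_num) (by norm_num)
      exact ((this.mul_left (4 * (1/2))).congr (fun n => by ring))
  exact this

/-- `φ` is strictly increasing on `(0, 1/2)`, tends to `0` at `0⁺`, and
`φ(1/2) > 1/8`; consequently there is a unique `p₀ ∈ (0, 1/2)` with `φ(p₀) = 1/8`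
(equivalently, a unique rhombic elliptic curve `τ₀ = 1/2 + iλ₀` with
`ϑ₂''(0 | τ₀) = 0`). -/
theorem stmt15 :
    StrictMonoOn phi15 (Set.Ioo (0 : ℝ) (1 / 2)) ∧
    Filter.Tendsto phi15 (nhdsWithin 0 (Set.Ioi 0)) (nhds 0) ∧
    1 / 8 < phi15 (1 / 2) ∧
    ∃! p₀ : ℝ, p₀ ∈ Set.Ioo (0 : ℝ) (1 / 2) ∧ phi15 p₀ = 1 / 8 := by
  refine ⟨strictMonoOn_phi15, tendsto_phi15, phi15_half, ?_⟩
  obtain ⟨a, haφ, ha⟩ : ∃ a, phi15 a < 1/8 ∧ a ∈ Ioo (0:ℝ) (1/2) := by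
    have h1 : ∀ᶠ p in nhdsWithin (0:ℝ) (Ioi 0), phi15 p < 1/8 :=
      tendsto_phi15 (Iio_mem_nhds (by norm_num : (0:ℝ) < 1/8))
    have hmem : Ioo (0:ℝ) (1/2) ∈ nhdsWithin (0:ℝ) (Ioi 0) :=
      Ioo_mem_nhdsGT_of_mem (by norm_num : (0:ℝ) ∈ Ico (0:ℝ) (1/2))
    exact (h1.and (eventually_of_mem hmem fun p hp => hp)).exists
  have hsub : Icc a (1/2 : ℝ) ⊆ Icc 0 (1/2) := Icc_subset_Icc ha.1.le le_rfl
  have hIVT := intermediate_value_Ioo ha.2.le (continuousOn_phi15.mono hsub)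
  obtain ⟨p₀, hp₀, hφ⟩ := hIVT (⟨haφ, phi15_half⟩ : (1/8 : ℝ) ∈ Ioo (phi15 a) (phi15 (1/2)))
  have hp₀' : p₀ ∈ Ioo (0:ℝ) (1/2) := ⟨lt_trans ha.1 hp₀.1, hp₀.2⟩
  refine ⟨p₀, ⟨hp₀', hφ⟩, ?_⟩
  rintro q ⟨hq, hqφ⟩
  exact strictMonoOn_phi15.injOn hq hp₀' (by rw [hqφ, hφ])
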